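/- Let A ∈ ℝ^{m×n}, b ∈ ℝ^m, c ∈ ℝ^n. Suppose the linear program minimize cᵀx subject to Ax = b (no nonnegativity constraint) attains its minimum at some y ∈ ℝ^n. Then there exists a minimizer x* ∈ ℝ^n with Ax* = b, cᵀx* = cᵀy, and x* has at most m nonzero entries. -/

import Mathlib

open Matrix

theorem stmt13 (m n : ℕ) (A : Matrix (Fin m) (Fin n) ℝ) (b : Fin m → ℝ)
    (c : Fin n → ℝ) (y : Fin n → ℝ) (hfeas : A.mulVec y = b)
    (hopt : ∀ x, A.mulVec x = b → c ⬝ᵥ y ≤ c ⬝ᵥ x) :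
    ∃ x' : Fin n → ℝ, A.mulVec x' = b ∧ c ⬝ᵥ x' = c ⬝ᵥ y ∧
      (Finset.univ.filter fun i => x' i ≠ 0).card ≤ m := by
  suffices h : ∀ k (y : Fin n → ℝ), (Finset.univ.filter fun i => y i ≠ 0).card ≤ k →
      A.mulVec y = b → (∀ x, A.mulVec x = b → c ⬝ᵥ y ≤ c ⬝ᵥ x) →
      ∃ x', A.mulVec x' = b ∧ c ⬝ᵥ x' = c ⬝ᵥ y ∧
        (Finset.univ.filter fun i => x' i ≠ 0).card ≤ m by
    exact h _ y le_rfl hfeas hopt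
  intro k
  induction k with
  | zero =>
    intro y hcard hfeas hopt
    exact ⟨y, hfeas, rfl, hcard.trans (Nat.zero_le m)⟩
  | succ k ih =>
    intro y hcard hfeas hopt
    by_cases hm : (Finset.univ.filter fun i => y i ≠ 0).card ≤ m
    · exact ⟨y, hfeas, rfl, hm⟩
    push_neg at hm
    set s : Finset (Fin n) := Finset.univ.filter fun i => y i ≠ 0 with hs
    -- extension-by-zero linear map
    let E : (s → ℝ) →ₗ[ℝ] (Fin n → ℝ) :=
      { toFun := fun v i => if h : i ∈ s then v ⟨i, h⟩ else 0
        map_add' := by intro v w; funext i; by_cases h : i ∈ s <;> simp [h]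
        map_smul' := by intro a v; funext i; by_cases h : i ∈ s <;> simp [h] }
    let f := A.mulVecLin ∘ₗ E
    have hninj : ¬ Function.Injective f := by
      intro hinj
      have hle := LinearMap.finrank_le_finrank_of_injective hinj
      rw [Module.finrank_fintype_fun_eq_card, Module.finrank_fintype_fun_eq_card,
        Fintype.card_coe, Fintype.card_fin] at hle
      omega
    have hker : LinearMap.ker f ≠ ⊥ := fun h => hninj (LinearMap.ker_eq_bot.mp h)
    obtain ⟨v, hv, hvne⟩ := (Submodule.ne_bot_iff _).mp hker
    set d : Fin n → ℝ := E v with hd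
    have hAd : A.mulVec d = 0 := by
      have := LinearMap.mem_ker.mp hv
      simpa [f, hd, LinearMap.comp_apply, mulVecLin_apply] using this
    obtain ⟨j, hj⟩ := Function.ne_iff.mp hvne
    have hdj : d j.1 ≠ 0 := by
      simpa [hd, E, j.2] using hj
    -- feasibility of y + t • d
    have hfeas' : ∀ t : ℝ, A.mulVec (y + t • d) = b := by
      intro t
      rw [mulVec_add, mulVec_smul, hAd, smul_zero, add_zero, hfeas]
    have hval : ∀ t : ℝ, c ⬝ᵥ (y + t • d) = c ⬝ᵥ y + t * (c ⬝ᵥ d) := by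
      intro t
      simp [dotProduct_add, dotProduct_smul, smul_eq_mul]
    -- c ⬝ d = 0
    have hcd : c ⬝ᵥ d = 0 := by
      have h1 := hopt _ (hfeas' (-(c ⬝ᵥ d)))
      rw [hval] at h1
      nlinarith
    set t : ℝ := - y j.1 / d j.1 with ht
    set y' : Fin n → ℝ := y + t • d with hy'
    have hyj : y' j.1 = 0 := by
      simp only [hy', Pi.add_apply, Pi.smul_apply, smul_eq_mul, ht]
      field_simp
      ring
    have hdsupp : ∀ i, i ∉ s → d i = 0 := by
      intro i hi
      simp [hd, E, hi]
    have hsub : (Finset.univ.filter fun i => y' i ≠ 0) ⊆ s.erase j.1 := by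
      intro i hi
      rw [Finset.mem_filter] at hi
      rcases hi with ⟨-, hi⟩
      rw [Finset.mem_erase]
      constructor
      · intro hij; exact hi (hij ▸ hyj)
      · by_contra his
        apply hi
        have hyi : y i = 0 := by
          by_contra hyi
          exact his (Finset.mem_filter.mpr ⟨Finset.mem_univ i, hyi⟩)
        simp [hy', hyi, hdsupp i his]
    have hcard' : (Finset.univ.filter fun i => y' i ≠ 0).card ≤ k := by
      have h1 := Finset.card_le_card hsub
      have h2 : (s.erase j.1).card = s.card - 1 :=
        Finset.card_erase_of_mem j.2
      omega
    have hval' : c ⬝ᵥ y' = c ⬝ᵥ y := by rw [hy', hval, hcd, mul_zero, add_zero]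
    have hopt' : ∀ x, A.mulVec x = b → c ⬝ᵥ y' ≤ c ⬝ᵥ x := by
      intro x hx; rw [hval']; exact hopt x hx
    obtain ⟨x', hx1, hx2, hx3⟩ := ih y' hcard' (hfeas' t) hopt'
    exact ⟨x', hx1, hx2.trans hval', hx3⟩
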